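/- For all n > 24, 0 < ε < 1/3, and all m such that the load factor L = m/n satisfies L > ε^{-2} (so in particular L > 9), one has P{ |∑_{i=1}^n k_i(x)(k_i(x)−1)/(m(m−1)) · 1/‖p‖² − 1| ≤ 22 ε } ≥ 1 − (10/9) e^{−L ε²}, where x ∈ U^m is drawn from the product measure. -/

import Mathlib

/-- Number of keys of the sequence `x` (counted with multiplicity) hashed into slot `i`. -/
def kcount {U : Type*} [Fintype U] {n m : ℕ} (h : U → Fin n) (x : Fin m → U) (i : Fin n) : ℕ :=
  (Finset.univ.filter (fun j => h (x j) = i)).card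

/-- Probability of a set `S` of key sequences, under the product measure induced by
the probability mass function `q` on the key space `U`. -/
noncomputable def Pr {U : Type*} [Fintype U] {m : ℕ} (q : U → ℝ) (S : Set (Fin m → U)) : ℝ :=
  ∑ x : Fin m → U, S.indicator (fun y => ∏ j, q (y j)) x

/-- The empirical collision probability `∑ i, k_i(x)(k_i(x) − 1) / (m(m−1))`
of a sequence `x` of `m` keys. -/
noncomputable def collEst {U : Type*} [Fintype U] {n m : ℕ} (h : U → Fin n)
    (x : Fin m → U) : ℝ :=
  ∑ i : Fin n, (kcount h x i : ℝ) * ((kcount h x i : ℝ) - 1) / ((m : ℝ) * ((m : ℝ) - 1))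



set_option maxHeartbeats 1000000
open Finset


lemma sum_prod_eq {ι α : Type*} [Fintype ι] [DecidableEq ι] [Fintype α] (F : ι → α → ℝ) :
    ∑ x : ι → α, ∏ j, F j (x j) = ∏ j, ∑ u, F j u := by
  rw [Finset.prod_univ_sum, Fintype.piFinset_univ]

lemma exists_perm_two {α : Type*} [DecidableEq α] {a b a' b' : α} (hab : a ≠ b) (hab' : a' ≠ b') :
    ∃ τ : Equiv.Perm α, τ a = a' ∧ τ b = b' := by
  refine ⟨(Equiv.swap a a').trans (Equiv.swap ((Equiv.swap a a') b) b'), ?_, ?_⟩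
  · have h1 : (Equiv.swap a a') a = a' := Equiv.swap_apply_left a a'
    have h2 : (Equiv.swap a a') b ≠ a' := fun hc => hab ((Equiv.swap a a').injective (by rw [h1, hc]))
    simp only [Equiv.trans_apply, h1]
    exact Equiv.swap_apply_of_ne_of_ne h2.symm hab'
  · simp only [Equiv.trans_apply, Equiv.swap_apply_left]

lemma perm_sum {m : ℕ} (f : Fin m → Fin m → ℝ) {a b : Fin m} (hab : a ≠ b) :
    (((Finset.univ : Finset (Fin m)).offDiag.card : ℝ)) * ∑ σ : Equiv.Perm (Fin m), f (σ a) (σ b)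
      = (Fintype.card (Equiv.Perm (Fin m)) : ℝ) *
          ∑ p ∈ (Finset.univ : Finset (Fin m)).offDiag, f p.1 p.2 := by
  have key : ∀ a' b' : Fin m, a' ≠ b' →
      ∑ σ : Equiv.Perm (Fin m), f (σ a') (σ b') = ∑ σ : Equiv.Perm (Fin m), f (σ a) (σ b) := by
    intro a' b' h'
    obtain ⟨τ, hτa, hτb⟩ := exists_perm_two hab h'
    calc ∑ σ : Equiv.Perm (Fin m), f (σ a') (σ b')
        = ∑ σ : Equiv.Perm (Fin m), f ((Equiv.mulRight τ σ) a) ((Equiv.mulRight τ σ) b) := by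
          simp only [Equiv.coe_mulRight, Equiv.Perm.mul_apply, hτa, hτb]
      _ = ∑ σ : Equiv.Perm (Fin m), f (σ a) (σ b) :=
          Equiv.sum_comp (Equiv.mulRight τ) (fun σ => f (σ a) (σ b))
  calc (((Finset.univ : Finset (Fin m)).offDiag.card : ℝ)) * ∑ σ : Equiv.Perm (Fin m), f (σ a) (σ b)
      = ∑ p ∈ (Finset.univ : Finset (Fin m)).offDiag, ∑ σ : Equiv.Perm (Fin m), f (σ p.1) (σ p.2) := by
        rw [Finset.sum_congr rfl (fun p hp => key p.1 p.2 (Finset.mem_offDiag.mp hp).2.2),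
          Finset.sum_const, nsmul_eq_mul]
    _ = ∑ σ : Equiv.Perm (Fin m), ∑ p ∈ (Finset.univ : Finset (Fin m)).offDiag, f (σ p.1) (σ p.2) :=
        Finset.sum_comm
    _ = ∑ σ : Equiv.Perm (Fin m), ∑ p ∈ (Finset.univ : Finset (Fin m)).offDiag, f p.1 p.2 := by
        refine Finset.sum_congr rfl (fun σ _ => ?_)
        refine Finset.sum_equiv (Equiv.prodCongr σ σ) (fun p => ?_) (fun p _ => rfl)
        simp [Finset.mem_offDiag, (EmbeddingLike.apply_eq_iff_eq σ).ne]
    _ = _ := by rw [Finset.sum_const, nsmul_eq_mul, Finset.card_univ]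


lemma collsum {U : Type*} [Fintype U] {n m : ℕ} (h : U → Fin n) (x : Fin m → U) :
    ∑ i : Fin n, (kcount h x i : ℝ) * ((kcount h x i : ℝ) - 1)
      = ∑ p ∈ (Finset.univ : Finset (Fin m)).offDiag,
          (if h (x p.1) = h (x p.2) then (1:ℝ) else 0) := by
  have hk : ∀ i, (kcount h x i : ℝ) = ∑ j : Fin m, (if h (x j) = i then (1:ℝ) else 0) := by
    intro i
    rw [kcount, Finset.card_filter]
    push_cast
    rfl
  have h1 : ∑ i : Fin n, (kcount h x i : ℝ) = m := by
    simp only [hk]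
    rw [Finset.sum_comm]
    simp
  have h2 : ∑ i : Fin n, (kcount h x i : ℝ) * (kcount h x i : ℝ)
      = ∑ p ∈ (Finset.univ : Finset (Fin m)) ×ˢ (Finset.univ : Finset (Fin m)),
          (if h (x p.1) = h (x p.2) then (1:ℝ) else 0) := by
    simp only [hk, Finset.sum_mul_sum, Finset.sum_product]
    rw [Finset.sum_comm]
    refine Finset.sum_congr rfl fun j _ => ?_
    rw [Finset.sum_comm]
    refine Finset.sum_congr rfl fun j' _ => ?_
    by_cases hc : h (x j) = h (x j')
    · rw [if_pos hc]
      rw [hc]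
      simp
    · rw [if_neg hc]
      apply Finset.sum_eq_zero
      intro i _
      by_cases hi : h (x j) = i
      · rw [if_pos hi, if_neg (by rw [← hi]; exact fun e => hc e.symm), one_mul]
      · rw [if_neg hi, zero_mul]
  have hsplit : ∑ p ∈ (Finset.univ : Finset (Fin m)) ×ˢ (Finset.univ : Finset (Fin m)),
      (if h (x p.1) = h (x p.2) then (1:ℝ) else 0)
      = (m : ℝ) + ∑ p ∈ (Finset.univ : Finset (Fin m)).offDiag,
          (if h (x p.1) = h (x p.2) then (1:ℝ) else 0) := by
    rw [← Finset.diag_union_offDiag, Finset.sum_union (Finset.disjoint_diag_offDiag _),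
      Finset.sum_diag]
    simp
  calc ∑ i : Fin n, (kcount h x i : ℝ) * ((kcount h x i : ℝ) - 1)
      = ∑ i : Fin n, ((kcount h x i : ℝ) * (kcount h x i : ℝ) - (kcount h x i : ℝ)) := by
        refine Finset.sum_congr rfl fun i _ => by ring
    _ = ∑ i : Fin n, (kcount h x i : ℝ) * (kcount h x i : ℝ) - ∑ i : Fin n, (kcount h x i : ℝ) :=
        Finset.sum_sub_distrib _ _
    _ = _ := by rw [h1, h2, hsplit]; ring

lemma prod_range_two_mul (f : ℕ → ℝ) (k : ℕ) :
    ∏ j ∈ Finset.range (2*k), f j = ∏ i ∈ Finset.range k, (f (2*i) * f (2*i+1)) := by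
  induction k with
  | zero => simp
  | succ k ih =>
    have h2 : 2*(k+1) = (2*k+1)+1 := by ring
    rw [h2, Finset.prod_range_succ, Finset.prod_range_succ, ih, Finset.prod_range_succ]
    ring

lemma prod_fin_split {U : Type*} [Fintype U] (q : U → ℝ) {m k : ℕ} (hk : 2*k ≤ m)
    (x : Fin m → U) :
    ∏ j : Fin m, q (x j) =
      (∏ i : Fin k, q (x ⟨2*(i:ℕ), by have := i.isLt; omega⟩)
        * q (x ⟨2*(i:ℕ)+1, by have := i.isLt; omega⟩))
      * ∏ j : Fin (m - 2*k), q (x ⟨2*k + (j:ℕ), by have := j.isLt; omega⟩) := by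
  set f : ℕ → ℝ := fun j => if hj : j < m then q (x ⟨j, hj⟩) else 1 with hf
  have h0 : ∏ j : Fin m, q (x j) = ∏ j ∈ Finset.range m, f j := by
    rw [← Fin.prod_univ_eq_prod_range f m]
    exact Finset.prod_congr rfl fun j _ => by simp [hf, j.isLt]
  have hm2 : 2*k + (m - 2*k) = m := by omega
  have h1 : ∏ j ∈ Finset.range m, f j
      = (∏ j ∈ Finset.range (2*k), f j) * ∏ j ∈ Finset.range (m - 2*k), f (2*k + j) := by
    rw [← Finset.prod_range_add f (2*k) (m - 2*k), hm2]
  have h2 : ∏ j ∈ Finset.range (2*k), f j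
      = ∏ i : Fin k, (q (x ⟨2*(i:ℕ), by have := i.isLt; omega⟩)
          * q (x ⟨2*(i:ℕ)+1, by have := i.isLt; omega⟩)) := by
    rw [prod_range_two_mul, ← Fin.prod_univ_eq_prod_range (fun i => f (2*i) * f (2*i+1)) k]
    refine Finset.prod_congr rfl fun i _ => ?_
    have hi := i.isLt
    simp only [hf]
    rw [dif_pos (show 2*(i:ℕ) < m by omega), dif_pos (show 2*(i:ℕ)+1 < m by omega)]
  have h3 : ∏ j ∈ Finset.range (m - 2*k), f (2*k + j)
      = ∏ j : Fin (m - 2*k), q (x ⟨2*k + (j:ℕ), by have := j.isLt; omega⟩) := by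
    rw [← Fin.prod_univ_eq_prod_range (fun j => f (2*k + j)) (m - 2*k)]
    refine Finset.prod_congr rfl fun j _ => ?_
    have hj := j.isLt
    simp only [hf]
    rw [dif_pos (show 2*k + (j:ℕ) < m by omega)]
  rw [h0, h1, h2, h3]

lemma fact_pairs {U : Type*} [Fintype U] (q : U → ℝ) {m k : ℕ} (hk : 2*k ≤ m) (G : U → U → ℝ) :
    ∑ x : Fin m → U, (∏ j, q (x j)) *
        ∏ i : Fin k, G (x ⟨2*(i:ℕ), by have := i.isLt; omega⟩) (x ⟨2*(i:ℕ)+1, by have := i.isLt; omega⟩)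
      = (∑ u, ∑ v, q u * q v * G u v)^k * (∑ u, q u)^(m - 2*k) := by
  classical
  set H : U × U → ℝ := fun v => q v.1 * q v.2 * G v.1 v.2 with hH
  set Ψ : (Fin m → U) → (Fin k → U × U) × (Fin (m - 2*k) → U) :=
    fun x => (fun i => (x ⟨2*(i:ℕ), by have := i.isLt; omega⟩,
                        x ⟨2*(i:ℕ)+1, by have := i.isLt; omega⟩),
              fun j => x ⟨2*k + (j:ℕ), by have := j.isLt; omega⟩) with hΨ
  have hbij : Function.Bijective Ψ := by
    rw [Fintype.bijective_iff_injective_and_card]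
    constructor
    · intro x x' he
      have hy := congrArg Prod.fst he
      have hz := congrArg Prod.snd he
      simp only [hΨ] at hy hz
      funext j
      by_cases hj : (j:ℕ) < 2*k
      · by_cases hpar : (j:ℕ) % 2 = 0
        · have hjj : j = (⟨2*((j:ℕ)/2), by omega⟩ : Fin m) := Fin.ext (by simp; omega)
          rw [hjj]
          exact congrArg Prod.fst (congrFun hy ⟨(j:ℕ)/2, by omega⟩)
        · have hjj : j = (⟨2*((j:ℕ)/2)+1, by omega⟩ : Fin m) := Fin.ext (by simp; omega)
          rw [hjj]
          exact congrArg Prod.snd (congrFun hy ⟨(j:ℕ)/2, by omega⟩)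
      · have hjj : j = (⟨2*k + ((j:ℕ) - 2*k), by have := j.isLt; omega⟩ : Fin m) :=
          Fin.ext (by simp; omega)
        rw [hjj]
        exact congrFun hz ⟨(j:ℕ) - 2*k, by have := j.isLt; omega⟩
    · simp only [Fintype.card_prod, Fintype.card_fun, Fintype.card_fin]
      rw [show Fintype.card U * Fintype.card U = Fintype.card U ^ 2 from (sq _).symm,
        ← pow_mul, ← pow_add]
      congr 1
      omega
  have hstep : ∑ x : Fin m → U, (∏ j, q (x j)) *
        ∏ i : Fin k, G (x ⟨2*(i:ℕ), by have := i.isLt; omega⟩) (x ⟨2*(i:ℕ)+1, by have := i.isLt; omega⟩)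
      = ∑ yz : (Fin k → U × U) × (Fin (m - 2*k) → U),
          (∏ i, H (yz.1 i)) * ∏ j, q (yz.2 j) := by
    refine Fintype.sum_bijective Ψ hbij _ _ (fun x => ?_)
    simp only [hΨ, hH]
    rw [prod_fin_split q hk x, mul_right_comm, ← Finset.prod_mul_distrib]
  rw [hstep, Fintype.sum_prod_type]
  dsimp only
  rw [← Finset.sum_mul_sum]
  congr 1
  · rw [sum_prod_eq (fun _ v => H v), Finset.prod_const, Finset.card_univ, Fintype.card_fin]
    congr 1
    rw [Fintype.sum_prod_type]
  · rw [sum_prod_eq (fun _ u => q u), Finset.prod_const, Finset.card_univ, Fintype.card_fin]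


lemma mgf_bound {U : Type*} [Fintype U] {n : ℕ} (q : U → ℝ) (hq0 : ∀ u, 0 ≤ q u)
    (hq1 : ∑ u, q u = 1) (h : U → Fin n) (p : Fin n → ℝ)
    (hp : ∀ i, p i = ∑ u ∈ Finset.univ.filter (fun u => h u = i), q u)
    {m k : ℕ} (hm : 2 ≤ m) (hk : k = m / 2) (t : ℝ) :
    ∑ x : Fin m → U, (∏ j, q (x j)) * Real.exp (t * collEst h x)
      ≤ (1 + (∑ i, p i ^ 2) * (Real.exp (t / (k:ℝ)) - 1)) ^ k := by
  classical
  have hk1 : 1 ≤ k := by omega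
  have hk2 : 2 * k ≤ m := by omega
  have hkR : (0:ℝ) < (k:ℝ) := by exact_mod_cast hk1
  have hmR : (2:ℝ) ≤ (m:ℝ) := by exact_mod_cast hm
  have hmm0 : ((m:ℝ) * ((m:ℝ) - 1)) ≠ 0 := by nlinarith
  set cP : ℕ := Fintype.card (Equiv.Perm (Fin m)) with hcPdef
  have hcP : 0 < cP := Fintype.card_pos
  have hcPR : (0:ℝ) < (cP:ℝ) := by exact_mod_cast hcP
  set S : (Fin m → U) → ℝ := fun x => ∑ pr ∈ (Finset.univ : Finset (Fin m)).offDiag,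
    (if h (x pr.1) = h (x pr.2) then (1:ℝ) else 0) with hSdef
  have hS : ∀ x : Fin m → U, collEst h x = S x / ((m:ℝ) * ((m:ℝ) - 1)) := by
    intro x
    rw [collEst, ← Finset.sum_div, collsum]
  set Y : Equiv.Perm (Fin m) → (Fin m → U) → ℝ := fun σ x =>
    (1/(k:ℝ)) * ∑ i : Fin k,
      (if h (x (σ ⟨2*(i:ℕ), by have := i.isLt; omega⟩))
          = h (x (σ ⟨2*(i:ℕ)+1, by have := i.isLt; omega⟩)) then (1:ℝ) else 0) with hYdef
  -- the key averaging identity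
  have hoc : (((Finset.univ : Finset (Fin m)).offDiag.card : ℝ)) = (m:ℝ) * ((m:ℝ) - 1) := by
    rw [Finset.offDiag_card, Finset.card_univ, Fintype.card_fin]
    have hle : m ≤ m * m := Nat.le_mul_of_pos_left m (by omega)
    push_cast [Nat.cast_sub hle]
    ring
  have hYsum : ∀ x : Fin m → U, ∑ σ : Equiv.Perm (Fin m), Y σ x = (cP:ℝ) * collEst h x := by
    intro x
    have key : ∀ (a b : Fin m), a ≠ b →
        ∑ σ : Equiv.Perm (Fin m), (if h (x (σ a)) = h (x (σ b)) then (1:ℝ) else 0)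
          = (cP:ℝ) * S x / ((m:ℝ) * ((m:ℝ) - 1)) := by
      intro a b hab
      have hps := perm_sum (fun a b => if h (x a) = h (x b) then (1:ℝ) else 0) hab
      rw [hoc] at hps
      rw [eq_div_iff hmm0]
      rw [mul_comm] at hps
      exact hps
    calc ∑ σ : Equiv.Perm (Fin m), Y σ x
        = (1/(k:ℝ)) * ∑ i : Fin k, ∑ σ : Equiv.Perm (Fin m),
            (if h (x (σ ⟨2*(i:ℕ), by have := i.isLt; omega⟩))
                = h (x (σ ⟨2*(i:ℕ)+1, by have := i.isLt; omega⟩)) then (1:ℝ) else 0) := by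
          rw [hYdef, ← Finset.mul_sum, Finset.sum_comm]
      _ = (1/(k:ℝ)) * ∑ _i : Fin k, (cP:ℝ) * S x / ((m:ℝ) * ((m:ℝ) - 1)) := by
          congr 1
          refine Finset.sum_congr rfl fun i _ => ?_
          exact key _ _ (by simp [Fin.ext_iff])
      _ = (cP:ℝ) * collEst h x := by
          rw [Finset.sum_const, Finset.card_univ, Fintype.card_fin, nsmul_eq_mul, hS x]
          field_simp
  -- Jensen
  have hJen : ∀ x : Fin m → U, Real.exp (t * collEst h x)
      ≤ ∑ σ : Equiv.Perm (Fin m), (1/(cP:ℝ)) * Real.exp (t * Y σ x) := by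
    intro x
    have h1 : t * collEst h x = ∑ σ : Equiv.Perm (Fin m), (1/(cP:ℝ)) • (t * Y σ x) := by
      simp only [smul_eq_mul]
      rw [← Finset.mul_sum, ← Finset.mul_sum, hYsum x]
      field_simp
    have h2 := convexOn_exp.map_sum_le (t := (Finset.univ : Finset (Equiv.Perm (Fin m))))
      (w := fun _ => (1/(cP:ℝ))) (p := fun σ => t * Y σ x)
      (fun _ _ => by positivity)
      (by rw [Finset.sum_const, Finset.card_univ, nsmul_eq_mul]; field_simp; rw [hcPdef])
      (fun _ _ => Set.mem_univ _)
    rw [h1]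
    simpa only [smul_eq_mul] using h2
  -- per-permutation expectation
  have hG : ∀ σ : Equiv.Perm (Fin m),
      ∑ x : Fin m → U, (∏ j, q (x j)) * Real.exp (t * Y σ x)
        = (1 + (∑ i, p i ^ 2) * (Real.exp (t / (k:ℝ)) - 1)) ^ k := by
    intro σ
    set G : U → U → ℝ := fun u v => if h u = h v then Real.exp (t/(k:ℝ)) else 1 with hGdef
    have hexpY : ∀ x : Fin m → U, Real.exp (t * Y σ x)
        = ∏ i : Fin k, G (x (σ ⟨2*(i:ℕ), by have := i.isLt; omega⟩))
            (x (σ ⟨2*(i:ℕ)+1, by have := i.isLt; omega⟩)) := by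
      intro x
      have h1 : t * Y σ x = ∑ i : Fin k, (t/(k:ℝ)) *
          (if h (x (σ ⟨2*(i:ℕ), by have := i.isLt; omega⟩))
              = h (x (σ ⟨2*(i:ℕ)+1, by have := i.isLt; omega⟩)) then (1:ℝ) else 0) := by
        simp only [hYdef]
        rw [← mul_assoc, mul_one_div, Finset.mul_sum]
      rw [h1, Real.exp_sum]
      refine Finset.prod_congr rfl fun i _ => ?_
      by_cases hc : h (x (σ ⟨2*(i:ℕ), by have := i.isLt; omega⟩))
          = h (x (σ ⟨2*(i:ℕ)+1, by have := i.isLt; omega⟩))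
      · rw [if_pos hc, hGdef]
        simp only [if_pos hc, mul_one]
      · rw [if_neg hc, hGdef]
        simp only [if_neg hc, mul_zero, Real.exp_zero]
    have hre : ∑ x : Fin m → U, (∏ j, q (x j)) *
          ∏ i : Fin k, G (x (σ ⟨2*(i:ℕ), by have := i.isLt; omega⟩))
            (x (σ ⟨2*(i:ℕ)+1, by have := i.isLt; omega⟩))
        = ∑ x : Fin m → U, (∏ j, q (x j)) *
          ∏ i : Fin k, G (x ⟨2*(i:ℕ), by have := i.isLt; omega⟩)
            (x ⟨2*(i:ℕ)+1, by have := i.isLt; omega⟩) := by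
      have hcomp := Equiv.sum_comp (Equiv.arrowCongr σ.symm (Equiv.refl U))
        (fun x : Fin m → U => (∏ j, q (x j)) *
          ∏ i : Fin k, G (x ⟨2*(i:ℕ), by have := i.isLt; omega⟩)
            (x ⟨2*(i:ℕ)+1, by have := i.isLt; omega⟩))
      rw [← hcomp]
      refine Finset.sum_congr rfl fun x _ => ?_
      have hax : ∀ j : Fin m, (Equiv.arrowCongr σ.symm (Equiv.refl U)) x j = x (σ j) := by
        intro j
        simp [Equiv.arrowCongr]
      simp only [hax]
      congr 1
      exact (Equiv.prod_comp σ (fun j => q (x j))).symm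
    calc ∑ x : Fin m → U, (∏ j, q (x j)) * Real.exp (t * Y σ x)
        = ∑ x : Fin m → U, (∏ j, q (x j)) *
            ∏ i : Fin k, G (x (σ ⟨2*(i:ℕ), by have := i.isLt; omega⟩))
              (x (σ ⟨2*(i:ℕ)+1, by have := i.isLt; omega⟩)) := by
          exact Finset.sum_congr rfl fun x _ => by rw [hexpY x]
      _ = ∑ x : Fin m → U, (∏ j, q (x j)) *
            ∏ i : Fin k, G (x ⟨2*(i:ℕ), by have := i.isLt; omega⟩)
              (x ⟨2*(i:ℕ)+1, by have := i.isLt; omega⟩) := hre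
      _ = (∑ u, ∑ v, q u * q v * G u v)^k * (∑ u, q u)^(m - 2*k) := fact_pairs q hk2 G
      _ = (1 + (∑ i, p i ^ 2) * (Real.exp (t / (k:ℝ)) - 1)) ^ k := by
          rw [hq1, one_pow, mul_one]
          congr 1
          have hinner : ∀ u, ∑ v, q v * (if h u = h v then (1:ℝ) else 0) = p (h u) := by
            intro u
            rw [hp (h u), Finset.sum_filter]
            refine Finset.sum_congr rfl fun v _ => ?_
            by_cases hc : h v = h u
            · rw [if_pos hc, if_pos hc.symm, mul_one]
            · rw [if_neg hc, if_neg (fun e => hc e.symm), mul_zero]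
          have hcoll : ∑ u, q u * p (h u) = ∑ i, p i ^ 2 := by
            rw [← Fintype.sum_fiberwise h (fun u => q u * p (h u))]
            refine Finset.sum_congr rfl fun i _ => ?_
            calc ∑ u : {u // h u = i}, q u.1 * p (h u.1)
                = ∑ u : {u // h u = i}, q u.1 * p i := by
                  refine Finset.sum_congr rfl fun u _ => by rw [u.2]
              _ = (∑ u : {u // h u = i}, q u.1) * p i := by rw [Finset.sum_mul]
              _ = p i ^ 2 := by
                  rw [← Finset.sum_subtype (Finset.univ.filter (fun u => h u = i))
                    (by intro u; simp) q, ← hp i]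
                  ring
          calc ∑ u, ∑ v, q u * q v * G u v
              = ∑ u, ∑ v, (q u * q v + (Real.exp (t/(k:ℝ)) - 1) *
                  (q u * (q v * (if h u = h v then (1:ℝ) else 0)))) := by
                refine Finset.sum_congr rfl fun u _ => Finset.sum_congr rfl fun v _ => ?_
                rw [hGdef]
                by_cases hc : h u = h v
                · simp only [if_pos hc]
                  ring
                · simp only [if_neg hc]
                  ring
            _ = 1 + (∑ i, p i ^ 2) * (Real.exp (t / (k:ℝ)) - 1) := by
                rw [Finset.sum_congr rfl (fun u _ => Finset.sum_add_distrib),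
                  Finset.sum_add_distrib]
                congr 1
                · rw [← Finset.sum_mul_sum, hq1, one_mul]
                · rw [Finset.sum_congr rfl (fun u _ => (Finset.mul_sum _ _ _).symm),
                    ← Finset.mul_sum]
                  rw [Finset.sum_congr rfl (fun u _ => by rw [← Finset.mul_sum, hinner u]),
                    hcoll]
                  ring
  -- combine
  calc ∑ x : Fin m → U, (∏ j, q (x j)) * Real.exp (t * collEst h x)
      ≤ ∑ x : Fin m → U, (∏ j, q (x j)) *
          ∑ σ : Equiv.Perm (Fin m), (1/(cP:ℝ)) * Real.exp (t * Y σ x) := by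
        refine Finset.sum_le_sum fun x _ => ?_
        exact mul_le_mul_of_nonneg_left (hJen x) (Finset.prod_nonneg fun j _ => hq0 _)
    _ = ∑ σ : Equiv.Perm (Fin m), (1/(cP:ℝ)) *
          ∑ x : Fin m → U, (∏ j, q (x j)) * Real.exp (t * Y σ x) := by
        rw [Finset.sum_congr rfl (fun x _ => Finset.mul_sum Finset.univ _ _)]
        rw [Finset.sum_comm]
        refine Finset.sum_congr rfl fun σ _ => ?_
        rw [Finset.mul_sum]
        exact Finset.sum_congr rfl fun x _ => by ring
    _ = (1 + (∑ i, p i ^ 2) * (Real.exp (t / (k:ℝ)) - 1)) ^ k := by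
        rw [Finset.sum_congr rfl (fun σ _ => by rw [hG σ]), Finset.sum_const,
          Finset.card_univ, nsmul_eq_mul, hcPdef]
        field_simp

lemma exp_le_quad {x : ℝ} (h0 : 0 ≤ x) (h1 : x ≤ 1) :
    Real.exp x ≤ 1 + x + (3/4) * x^2 := by
  have hb := Real.exp_bound (x := x) (by rw [abs_of_nonneg h0]; exact h1) (n := 2) (by norm_num)
  rw [abs_of_nonneg h0] at hb
  have hs : ∑ i ∈ Finset.range 2, x ^ i / (Nat.factorial i) = 1 + x := by
    simp [Finset.sum_range_succ]
  rw [hs] at hb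
  have := abs_le.mp hb
  have h2 : ((2:ℕ).succ : ℝ) / ((Nat.factorial 2 : ℕ) * (2:ℕ)) = 3/4 := by norm_num [Nat.factorial]
  nlinarith [this.2]

lemma exp_neg_le_cubic {x : ℝ} (h0 : 0 ≤ x) (h1 : x ≤ 1) :
    Real.exp (-x) ≤ 1 - x + x^2/2 + (2/9) * x^3 := by
  have hb := Real.exp_bound (x := -x) (by rw [abs_neg, abs_of_nonneg h0]; exact h1)
    (n := 3) (by norm_num)
  rw [abs_neg, abs_of_nonneg h0] at hb
  have hs : ∑ i ∈ Finset.range 3, (-x) ^ i / (Nat.factorial i) = 1 - x + x^2/2 := by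
    simp [Finset.sum_range_succ, Nat.factorial]
    ring
  rw [hs] at hb
  have := abs_le.mp hb
  have h2 : ((3:ℕ).succ : ℝ) / ((Nat.factorial 3 : ℕ) * (3:ℕ)) = 2/9 := by norm_num [Nat.factorial]
  nlinarith [this.2]

lemma chernoff {U : Type*} [Fintype U] {n : ℕ} (q : U → ℝ) (hq0 : ∀ u, 0 ≤ q u)
    (hq1 : ∑ u, q u = 1) (h : U → Fin n) (p : Fin n → ℝ)
    (hp : ∀ i, p i = ∑ u ∈ Finset.univ.filter (fun u => h u = i), q u)
    {m k : ℕ} (hm : 2 ≤ m) (hk : k = m / 2) (t c : ℝ)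
    (B : Finset (Fin m → U)) (hB : ∀ x ∈ B, 0 ≤ t * collEst h x - c) :
    ∑ x ∈ B, (∏ j, q (x j))
      ≤ Real.exp (-c) * (1 + (∑ i, p i ^ 2) * (Real.exp (t / (k:ℝ)) - 1)) ^ k := by
  have hw : ∀ x : Fin m → U, 0 ≤ ∏ j, q (x j) :=
    fun x => Finset.prod_nonneg fun j _ => hq0 _
  calc ∑ x ∈ B, (∏ j, q (x j))
      ≤ ∑ x ∈ B, (∏ j, q (x j)) * Real.exp (t * collEst h x - c) := by
        refine Finset.sum_le_sum fun x hx => ?_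
        refine le_mul_of_one_le_right (hw x) ?_
        rw [← Real.exp_zero]
        exact Real.exp_le_exp.mpr (hB x hx)
    _ ≤ ∑ x : Fin m → U, (∏ j, q (x j)) * Real.exp (t * collEst h x - c) := by
        refine Finset.sum_le_sum_of_subset_of_nonneg (Finset.subset_univ B) fun x _ _ => ?_
        exact mul_nonneg (hw x) (Real.exp_nonneg _)
    _ = Real.exp (-c) * ∑ x : Fin m → U, (∏ j, q (x j)) * Real.exp (t * collEst h x) := by
        rw [Finset.mul_sum]
        refine Finset.sum_congr rfl fun x _ => ?_
        rw [show t * collEst h x - c = t * collEst h x + (-c) by ring, Real.exp_add]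
        ring
    _ ≤ _ := by
        refine mul_le_mul_of_nonneg_left ?_ (Real.exp_nonneg _)
        exact mgf_bound q hq0 hq1 h p hp hm hk t


/-- Corollary 6 of the paper: For all `n > 24`, `0 < ε < 1/3`, and all
`m` such that the load factor `L = m / n` satisfies `L > ε⁻²` (so in particular
`L > 9`), with probability at least `1 − (10/9) e^(−L ε²)` the empirical collision
probability estimates `‖p‖²` within relative error `22 ε`. -/
theorem collision_estimator_cor2
    {U : Type*} [Fintype U] [Nonempty U]
    (n : ℕ) (hn : 24 < n)
    (q : U → ℝ) (hq0 : ∀ u, 0 ≤ q u) (hq1 : ∑ u, q u = 1)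
    (h : U → Fin n)
    (p : Fin n → ℝ)
    (hp : ∀ i, p i = ∑ u ∈ Finset.univ.filter (fun u => h u = i), q u)
    (m : ℕ) (hm : 2 ≤ m)
    (ε : ℝ) (hε0 : 0 < ε) (hε : ε < 1 / 3)
    (L : ℝ) (hL : L = (m : ℝ) / (n : ℝ)) (hLε : ε ^ (-2 : ℝ) < L) :
    1 - (10 / 9) * Real.exp (-(L * ε ^ 2))
      ≤ Pr q {x : Fin m → U |
          |collEst h x * (1 / ∑ i : Fin n, p i ^ 2) - 1| ≤ 22 * ε} := by
  classical
  set r : ℝ := ∑ i : Fin n, p i ^ 2 with hrdef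
  set k : ℕ := m / 2 with hkdef
  have hw : ∀ x : Fin m → U, 0 ≤ ∏ j, q (x j) :=
    fun x => Finset.prod_nonneg fun j _ => hq0 _
  have hn25 : (25:ℝ) ≤ (n:ℝ) := by exact_mod_cast (by omega : 25 ≤ n)
  have hn0 : (0:ℝ) < (n:ℝ) := by linarith
  have hε2pos : (0:ℝ) < ε^2 := by positivity
  have hinv : ε ^ (-2:ℝ) = (ε^2)⁻¹ := by
    rw [show (-2:ℝ) = -(2:ℝ) by norm_num, Real.rpow_neg hε0.le,
      show ((2:ℝ)) = ((2:ℕ):ℝ) by norm_num, Real.rpow_natCast]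
  rw [hinv] at hLε
  have hLε2 : 1 < L * ε^2 := by
    calc (1:ℝ) = (ε^2)⁻¹ * ε^2 := by field_simp
    _ < L * ε^2 := by exact mul_lt_mul_of_pos_right hLε hε2pos
  have h9L : 9 < L := by
    have h3 : ε^2 < 1/9 := by nlinarith
    have h4 : (ε^2)⁻¹ * ε^2 = 1 := by field_simp
    nlinarith
  have hmR : (226:ℝ) ≤ (m:ℝ) := by
    have hmn : (m:ℝ) = L * n := by rw [hL]; field_simp
    have hm' : (225:ℝ) < (m:ℝ) := by nlinarith
    have : (225:ℕ) < m := by exact_mod_cast hm'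
    exact_mod_cast (by omega : 226 ≤ m)
  have hm226 : 226 ≤ m := by exact_mod_cast hmR
  have hkm : m - 1 ≤ 2*k := by omega
  have hkR : ((m:ℝ) - 1)/2 ≤ (k:ℝ) := by
    have h1 : ((m - 1 : ℕ) : ℝ) ≤ ((2*k : ℕ) : ℝ) := by exact_mod_cast hkm
    have h2 : ((m - 1 : ℕ) : ℝ) = (m:ℝ) - 1 := by
      rw [Nat.cast_sub (by omega : 1 ≤ m)]; norm_num
    push_cast at h1
    rw [Nat.cast_sub (by omega : 1 ≤ m)] at h1
    push_cast at h1
    linarith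
  -- facts about p and r
  have hp0 : ∀ i, 0 ≤ p i := fun i => by
    rw [hp i]; exact Finset.sum_nonneg fun u _ => hq0 u
  have hpsum : ∑ i, p i = 1 := by
    rw [Finset.sum_congr rfl (fun i (_ : i ∈ Finset.univ) => hp i),
      Finset.sum_fiberwise_eq_sum_filter]
    simpa using hq1
  have hr1 : r ≤ 1 := by
    rw [hrdef]
    calc ∑ i, p i ^ 2 ≤ ∑ i, p i := by
          refine Finset.sum_le_sum fun i _ => ?_
          have h1 := hp0 i
          have h2 : p i ≤ 1 := hpsum ▸ Finset.single_le_sum (fun j _ => hp0 j) (Finset.mem_univ i)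
          nlinarith
      _ = 1 := hpsum
  have hrn : 1 ≤ (n:ℝ) * r := by
    have hcs := sq_sum_le_card_mul_sum_sq (s := (Finset.univ : Finset (Fin n))) (f := p)
    rw [hpsum, Finset.card_univ, Fintype.card_fin] at hcs
    simpa using hcs
  have hr0 : (0:ℝ) < r := by nlinarith
  have hkr : (225/452) * L ≤ (k:ℝ) * r := by
    have hknn : (0:ℝ) ≤ (k:ℝ) := by positivity
    have h1 : (k:ℝ) * 1 ≤ (k:ℝ) * ((n:ℝ) * r) := mul_le_mul_of_nonneg_left hrn hknn
    have key : (225/452)*(m:ℝ) ≤ (k:ℝ)*r*(n:ℝ) := by nlinarith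
    rw [hL, mul_div_assoc', div_le_iff₀ hn0]
    linarith
  have hLεpos : (0:ℝ) < L * ε^2 := by linarith
  have hε3 : ε ≤ 1/3 := hε.le
  -- Chernoff upper tail
  have hup : ∑ x ∈ Finset.univ.filter (fun x : Fin m → U => r*(1+22*ε) < collEst h x),
      (∏ j, q (x j)) ≤ Real.exp (-(10*(L*ε^2))) := by
    have hch := chernoff q hq0 hq1 h p hp hm hkdef ((k:ℝ)*ε) ((k:ℝ)*ε*(r*(1+22*ε)))
      (Finset.univ.filter (fun x : Fin m → U => r*(1+22*ε) < collEst h x))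
      (fun x hx => by
        have hx' := (Finset.mem_filter.mp hx).2
        have hkε : (0:ℝ) ≤ (k:ℝ)*ε := by positivity
        nlinarith)
    refine hch.trans ?_
    have hk0 : ((k:ℝ)) ≠ 0 := by
      have : (113:ℕ) ≤ k := by omega
      have : (113:ℝ) ≤ (k:ℝ) := by exact_mod_cast this
      linarith
    rw [show (k:ℝ)*ε/(k:ℝ) = ε by field_simp, ← hrdef]
    have hE := exp_le_quad (x := ε) hε0.le (by linarith)
    have hE1 : (1:ℝ) ≤ Real.exp ε := by
      have := Real.add_one_le_exp ε; linarith
    have hφnn : (0:ℝ) ≤ 1 + r * (Real.exp ε - 1) := by nlinarith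
    have hφle : 1 + r * (Real.exp ε - 1) ≤ Real.exp (r * (Real.exp ε - 1)) := by
      have := Real.add_one_le_exp (r * (Real.exp ε - 1)); linarith
    calc Real.exp (-((k:ℝ)*ε*(r*(1+22*ε)))) * (1 + r * (Real.exp ε - 1)) ^ k
        ≤ Real.exp (-((k:ℝ)*ε*(r*(1+22*ε)))) * Real.exp (r * (Real.exp ε - 1)) ^ k :=
          mul_le_mul_of_nonneg_left (pow_le_pow_left₀ hφnn hφle k) (Real.exp_nonneg _)
      _ = Real.exp (-((k:ℝ)*ε*(r*(1+22*ε))) + (k:ℝ) * (r * (Real.exp ε - 1))) := by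
          rw [← Real.exp_nat_mul, ← Real.exp_add]
      _ ≤ Real.exp (-(10*(L*ε^2))) := by
          apply Real.exp_le_exp.mpr
          have hkrnn : (0:ℝ) ≤ (k:ℝ)*r := by positivity
          have h85 : (k:ℝ)*r*(85/4) ≥ 10*L := by nlinarith
          nlinarith [mul_le_mul_of_nonneg_left hE hkrnn]
  -- Chernoff lower tail
  have hlo : ∑ x ∈ Finset.univ.filter (fun x : Fin m → U => collEst h x < r*(1-22*ε)),
      (∏ j, q (x j)) ≤ Real.exp (-(10*(L*ε^2))) := by
    have hch := chernoff q hq0 hq1 h p hp hm hkdef (-((k:ℝ)*ε)) (-((k:ℝ)*ε*(r*(1-22*ε))))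
      (Finset.univ.filter (fun x : Fin m → U => collEst h x < r*(1-22*ε)))
      (fun x hx => by
        have hx' := (Finset.mem_filter.mp hx).2
        have hkε : (0:ℝ) ≤ (k:ℝ)*ε := by positivity
        nlinarith)
    refine hch.trans ?_
    have hk0 : ((k:ℝ)) ≠ 0 := by
      have : (113:ℕ) ≤ k := by omega
      have : (113:ℝ) ≤ (k:ℝ) := by exact_mod_cast this
      linarith
    rw [show -((k:ℝ)*ε)/(k:ℝ) = -ε by field_simp, ← hrdef]
    have hE := exp_neg_le_cubic (x := ε) hε0.le (by linarith)
    have hEnn : (0:ℝ) ≤ Real.exp (-ε) := Real.exp_nonneg _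
    have hE1 : Real.exp (-ε) ≤ 1 := by
      rw [Real.exp_le_one_iff]; linarith
    have hφnn : (0:ℝ) ≤ 1 + r * (Real.exp (-ε) - 1) := by nlinarith
    have hφle : 1 + r * (Real.exp (-ε) - 1) ≤ Real.exp (r * (Real.exp (-ε) - 1)) := by
      have := Real.add_one_le_exp (r * (Real.exp (-ε) - 1)); linarith
    calc Real.exp (-(-((k:ℝ)*ε*(r*(1-22*ε))))) * (1 + r * (Real.exp (-ε) - 1)) ^ k
        ≤ Real.exp (-(-((k:ℝ)*ε*(r*(1-22*ε))))) * Real.exp (r * (Real.exp (-ε) - 1)) ^ k :=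
          mul_le_mul_of_nonneg_left (pow_le_pow_left₀ hφnn hφle k) (Real.exp_nonneg _)
      _ = Real.exp (-(-((k:ℝ)*ε*(r*(1-22*ε)))) + (k:ℝ) * (r * (Real.exp (-ε) - 1))) := by
          rw [← Real.exp_nat_mul, ← Real.exp_add]
      _ ≤ Real.exp (-(10*(L*ε^2))) := by
          apply Real.exp_le_exp.mpr
          have hkrnn : (0:ℝ) ≤ (k:ℝ)*r := by positivity
          have h85 : (k:ℝ)*r*(85/4) ≥ 10*L := by nlinarith
          nlinarith [mul_le_mul_of_nonneg_left hE hkrnn, mul_le_mul_of_nonneg_right hkr hε2pos.le]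
  -- assemble
  have htot : ∑ x : Fin m → U, (∏ j, q (x j)) = 1 := by
    rw [sum_prod_eq (fun _ u => q u)]
    simp [hq1]
  set P : (Fin m → U) → Prop := fun x => |collEst h x * (1 / r) - 1| ≤ 22 * ε with hPdef
  have hPr : Pr q {x : Fin m → U | P x} = ∑ x ∈ Finset.univ.filter P, (∏ j, q (x j)) := by
    rw [Pr, Finset.sum_filter]
    refine Finset.sum_congr rfl fun x _ => ?_
    rw [Set.indicator_apply]
    simp only [Set.mem_setOf_eq]
    exact if_congr Iff.rfl rfl rfl
  have hsplit := Finset.sum_filter_add_sum_filter_not Finset.univ P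
    (fun x : Fin m → U => ∏ j, q (x j))
  rw [htot] at hsplit
  have hsubset : Finset.univ.filter (fun x : Fin m → U => ¬ P x) ⊆
      Finset.univ.filter (fun x : Fin m → U => r*(1+22*ε) < collEst h x) ∪
      Finset.univ.filter (fun x : Fin m → U => collEst h x < r*(1-22*ε)) := by
    intro x hx
    simp only [Finset.mem_filter, Finset.mem_union, Finset.mem_univ, true_and, hPdef] at hx ⊢
    rw [not_le] at hx
    rcases lt_abs.mp hx with hc | hc
    · left
      have : 1 + 22*ε < collEst h x * (1/r) := by linarith
      rw [mul_one_div, lt_div_iff₀ hr0] at this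
      linarith
    · right
      have : collEst h x * (1/r) < 1 - 22*ε := by linarith
      rw [mul_one_div, div_lt_iff₀ hr0] at this
      linarith
  have hdisj : Disjoint
      (Finset.univ.filter (fun x : Fin m → U => r*(1+22*ε) < collEst h x))
      (Finset.univ.filter (fun x : Fin m → U => collEst h x < r*(1-22*ε))) := by
    rw [Finset.disjoint_left]
    intro x hx1 hx2
    simp only [Finset.mem_filter] at hx1 hx2
    nlinarith [hx1.2, hx2.2]
  have hbad : ∑ x ∈ Finset.univ.filter (fun x : Fin m → U => ¬ P x), (∏ j, q (x j))
      ≤ 2 * Real.exp (-(10*(L*ε^2))) := by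
    calc ∑ x ∈ Finset.univ.filter (fun x : Fin m → U => ¬ P x), (∏ j, q (x j))
        ≤ ∑ x ∈ (Finset.univ.filter (fun x : Fin m → U => r*(1+22*ε) < collEst h x) ∪
            Finset.univ.filter (fun x : Fin m → U => collEst h x < r*(1-22*ε))), (∏ j, q (x j)) :=
          Finset.sum_le_sum_of_subset_of_nonneg hsubset (fun x _ _ => hw x)
      _ = _ + _ := Finset.sum_union hdisj
      _ ≤ Real.exp (-(10*(L*ε^2))) + Real.exp (-(10*(L*ε^2))) := add_le_add hup hlo
      _ = 2 * Real.exp (-(10*(L*ε^2))) := by ring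
  have hfinal : 2 * Real.exp (-(10*(L*ε^2))) ≤ (10/9) * Real.exp (-(L*ε^2)) := by
    have hsplit2 : Real.exp (-(10*(L*ε^2)))
        = Real.exp (-(9*(L*ε^2))) * Real.exp (-(L*ε^2)) := by
      rw [← Real.exp_add]; ring_nf
    have h10 : Real.exp (-(9*(L*ε^2))) ≤ 1/10 := by
      rw [Real.exp_neg]
      have h9 : (10:ℝ) ≤ Real.exp (9*(L*ε^2)) := by
        have h1 : (9:ℝ) ≤ 9*(L*ε^2) := by nlinarith
        have h2 := Real.add_one_le_exp (9*(L*ε^2))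
        linarith
      rw [inv_le_comm₀ (by positivity) (by norm_num)]
      linarith
    rw [hsplit2]
    have hexnn : (0:ℝ) ≤ Real.exp (-(L*ε^2)) := Real.exp_nonneg _
    nlinarith
  rw [hPr]
  have : ∑ x ∈ Finset.univ.filter P, (∏ j, q (x j))
      = 1 - ∑ x ∈ Finset.univ.filter (fun x => ¬ P x), (∏ j, q (x j)) := by linarith
  rw [this]
  linarith
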